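/- Let K be an algebraically closed field of characteristic different from 2, and let X = (x_{ij}) be a symmetric 4×4 matrix over K. Then all principal 2×2 minors of X vanish, i.e. x_{ii}x_{jj} = x_{ij}² for all 1 ≤ i < j ≤ 4, if and only if there exist a vector v = (v₁,v₂,v₃,v₄) ∈ K⁴ and signs s₂₃, s₂₄, s₃₄ ∈ {1,−1} such that x_{ii} = v_i² for all i, x_{1j} = v₁v_j for j = 2,3,4, and x_{ij} = s_{ij} v_i v_j for (i,j) ∈ {(2,3),(2,4),(3,4)}. In other words, the variety of symmetric 4×4 matrices whose principal 2×2 minors all vanish is the union of the eight scaled Veronese varieties obtained by Hadamard-scaling the rank-one symmetric matrices vᵀv by the eight sign matrices U_{ijk}. -/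

import Mathlib

open Matrix

lemma sign_aux' {K : Type*} [Field K] (x y c : K) (h : x ^ 2 * y ^ 2 = c ^ 2) :
    ∃ s : K, (s = 1 ∨ s = -1) ∧ c = s * (x * y) := by
  by_cases hxy : x * y = 0
  · refine ⟨1, Or.inl rfl, ?_⟩
    have hc2 : c ^ 2 = 0 := by rw [← h]; rcases mul_eq_zero.1 hxy with h0 | h0 <;> simp [h0]
    have hc : c = 0 := by
      exact pow_eq_zero_iff (by norm_num) |>.1 hc2
    simp [hc, hxy]
  · refine ⟨c / (x * y), ?_, (div_mul_cancel₀ c hxy).symm⟩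
    have hs : (c / (x * y)) ^ 2 = 1 := by
      rw [div_pow, div_eq_one_iff_eq (pow_ne_zero 2 hxy)]
      linear_combination -h
    have hfac : (c / (x * y) - 1) * (c / (x * y) + 1) = 0 := by linear_combination hs
    rcases mul_eq_zero.1 hfac with h0 | h0
    · left; linear_combination h0
    · right; linear_combination h0

/-- Let `K` be an algebraically closed field of characteristic
different from 2 and `X` a symmetric 4×4 matrix over `K`.  All principal 2×2
minors of `X` vanish (`x_{ii}x_{jj} = x_{ij}²` for `i < j`) if and only if there
are `v ∈ K⁴` and signs `s₂₃, s₄₂, s₃₄ ∈ {1,−1}` with `x_{ii} = v_i²`,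
`x_{1j} = v₁v_j` for `j = 2,3,4`, and `x_{ij} = s_{ij}v_iv_j` for
`(i,j) ∈ {(2,3),(2,4),(3,4)}`. -/
theorem principal_two_minors_vanish_iff {K : Type*} [Field K] [IsAlgClosed K]
    (hchar : ringChar K ≠ 2) (X : Matrix (Fin 4) (Fin 4) K) (hX : X.IsSymm) :
    (∀ i j : Fin 4, i < j → X i i * X j j = X i j ^ 2) ↔
      ∃ (v : Fin 4 → K) (s23 s24 s34 : K),
        (s23 = 1 ∨ s23 = -1) ∧ (s24 = 1 ∨ s24 = -1) ∧ (s34 = 1 ∨ s34 = -1) ∧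
        (∀ i : Fin 4, X i i = v i ^ 2) ∧
        X 0 1 = v 0 * v 1 ∧ X 0 2 = v 0 * v 2 ∧ X 0 3 = v 0 * v 3 ∧
        X 1 2 = s23 * (v 1 * v 2) ∧ X 1 3 = s24 * (v 1 * v 3) ∧
        X 2 3 = s34 * (v 2 * v 3) := by
  constructor
  · intro h
    obtain ⟨w0, hw0⟩ := IsAlgClosed.exists_pow_nat_eq (X 0 0) (n := 2) (by norm_num)
    obtain ⟨w1, hw1⟩ := IsAlgClosed.exists_pow_nat_eq (X 1 1) (n := 2) (by norm_num)
    obtain ⟨w2, hw2⟩ := IsAlgClosed.exists_pow_nat_eq (X 2 2) (n := 2) (by norm_num)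
    obtain ⟨w3, hw3⟩ := IsAlgClosed.exists_pow_nat_eq (X 3 3) (n := 2) (by norm_num)
    by_cases h0 : w0 = 0
    · -- X 0 0 = 0, so X 0 j = 0 for j > 0
      have hX00 : X 0 0 = 0 := by rw [← hw0, h0]; ring
      have hzero : ∀ j : Fin 4, (0 : Fin 4) < j → X 0 j = 0 := by
        intro j hj
        have := h 0 j hj
        rw [hX00, zero_mul] at this
        exact (pow_eq_zero_iff (by norm_num)).1 this.symm
      set v : Fin 4 → K := ![0, w1, w2, w3] with hv
      have hd : ∀ i : Fin 4, X i i = v i ^ 2 := by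
        intro i; fin_cases i <;> simp [hv, ← hw0, ← hw1, ← hw2, ← hw3, h0]
      obtain ⟨s23, hs23, he23⟩ := sign_aux' (v 1) (v 2) (X 1 2)
        (by rw [← hd 1, ← hd 2]; exact h 1 2 (by decide))
      obtain ⟨s24, hs24, he24⟩ := sign_aux' (v 1) (v 3) (X 1 3)
        (by rw [← hd 1, ← hd 3]; exact h 1 3 (by decide))
      obtain ⟨s34, hs34, he34⟩ := sign_aux' (v 2) (v 3) (X 2 3)
        (by rw [← hd 2, ← hd 3]; exact h 2 3 (by decide))
      refine ⟨v, s23, s24, s34, hs23, hs24, hs34, hd, ?_, ?_, ?_, he23, he24, he34⟩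
      · rw [hzero 1 (by decide)]; simp [hv]
      · rw [hzero 2 (by decide)]; simp [hv]
      · rw [hzero 3 (by decide)]; simp [hv]
    · set v : Fin 4 → K := ![w0, X 0 1 / w0, X 0 2 / w0, X 0 3 / w0] with hv
      have hd : ∀ i : Fin 4, X i i = v i ^ 2 := by
        intro i
        fin_cases i
        · simp [hv, ← hw0]
        · show X 1 1 = (X 0 1 / w0) ^ 2
          field_simp
          linear_combination X 1 1 * hw0 + h 0 1 (by decide)
        · show X 2 2 = (X 0 2 / w0) ^ 2
          field_simp
          linear_combination X 2 2 * hw0 + h 0 2 (by decide)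
        · show X 3 3 = (X 0 3 / w0) ^ 2
          field_simp
          linear_combination X 3 3 * hw0 + h 0 3 (by decide)
      obtain ⟨s23, hs23, he23⟩ := sign_aux' (v 1) (v 2) (X 1 2)
        (by rw [← hd 1, ← hd 2]; exact h 1 2 (by decide))
      obtain ⟨s24, hs24, he24⟩ := sign_aux' (v 1) (v 3) (X 1 3)
        (by rw [← hd 1, ← hd 3]; exact h 1 3 (by decide))
      obtain ⟨s34, hs34, he34⟩ := sign_aux' (v 2) (v 3) (X 2 3)
        (by rw [← hd 2, ← hd 3]; exact h 2 3 (by decide))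
      refine ⟨v, s23, s24, s34, hs23, hs24, hs34, hd, ?_, ?_, ?_, he23, he24, he34⟩
      · show X 0 1 = w0 * (X 0 1 / w0); field_simp
      · show X 0 2 = w0 * (X 0 2 / w0); field_simp
      · show X 0 3 = w0 * (X 0 3 / w0); field_simp
  · rintro ⟨v, s23, s24, s34, hs23, hs24, hs34, hd, h01, h02, h03, h12, h13, h23⟩
    intro i j hij
    rcases hs23 with rfl | rfl <;> rcases hs24 with rfl | rfl <;>
      rcases hs34 with rfl | rfl <;>
      fin_cases i <;> fin_cases j <;> simp_all <;> ring
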